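/- For every integer m > 1 and every uniform attachment trajectory defined up to time n ≥ m+1 with degree cap d = 2m, there exists an admissible continuation G_{n+1}, …, G_{n+m+1} of the trajectory by m+1 steps such that in G_{n+m+1}: every vertex of {1,…,n} has degree exactly d, and each of the m+1 new vertices n+1, …, n+m+1 has degree exactly m with all of its neighbors lying in {1,…,n} (in particular, the open vertices of G_{n+m+1} are exactly n+1, …, n+m+1, and they are pairwise non-adjacent). -/

import Mathlib

open Finset MeasureTheory Filter Topology
open scoped ENNReal

noncomputable section

open scoped Classical

/-- The degree of vertex `v` in the graph `g`, counting neighbors among `{1, …, n}`. -/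
def degIn (g : SimpleGraph ℕ) (n v : ℕ) : ℕ :=
  ((Finset.Icc 1 n).filter fun u => g.Adj v u).card

/-- The set of neighbors of vertex `v` in the graph `g` among `{1, …, n}`. -/
def nbrsIn (g : SimpleGraph ℕ) (n v : ℕ) : Finset ℕ :=
  (Finset.Icc 1 n).filter fun u => g.Adj v u

/-- `g'` is obtained from `g` (a graph on `{1,…,n}`) by one admissible uniform-attachment
step with parameter `m` and degree cap `d = 2m`: the new vertex `n+1` is joined to `m`
distinct vertices of `{1,…,n}`, each of degree `< 2m` in `g`; adjacencies among the other
vertices are unchanged, and all edges of `g'` stay inside `{1,…,n+1}`. -/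
def IsUAStep (m n : ℕ) (g g' : SimpleGraph ℕ) : Prop :=
  (∀ u v, g'.Adj u v → u ∈ Finset.Icc 1 (n+1) ∧ v ∈ Finset.Icc 1 (n+1)) ∧
  (∀ u v, u ≠ n+1 → v ≠ n+1 → (g'.Adj u v ↔ g.Adj u v)) ∧
  (nbrsIn g' (n+1) (n+1)).card = m ∧
  (∀ u, g'.Adj (n+1) u → u ∈ Finset.Icc 1 n ∧ degIn g n u < 2*m)

/-- The complete graph on the vertex set `{1, …, k}` (as a graph on `ℕ`). -/
def completeOn (k : ℕ) : SimpleGraph ℕ :=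
  SimpleGraph.fromRel (fun u v => u ∈ Finset.Icc 1 k ∧ v ∈ Finset.Icc 1 k)

/-- A uniform attachment trajectory with parameter `m` (degree cap `d = 2m`):
`G (m+1)` is the complete graph on `{1,…,m+1}`, and for each `n ≥ m+1` the graph `G (n+1)`
is obtained from `G n` by an admissible uniform attachment step.
(The values `G k` for `k ≤ m` are irrelevant.) -/
structure UATraj (m : ℕ) where
  G : ℕ → SimpleGraph ℕ
  init : G (m+1) = completeOn (m+1)
  step : ∀ n, m+1 ≤ n → IsUAStep m n (G n) (G (n+1))

/-- A uniform attachment trajectory with parameter `m`, defined up to time `N`. -/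
structure UATrajUpTo (m N : ℕ) where
  G : ℕ → SimpleGraph ℕ
  init : G (m+1) = completeOn (m+1)
  step : ∀ n, m+1 ≤ n → n+1 ≤ N → IsUAStep m n (G n) (G (n+1))

/-- `g` (a graph of a trajectory at time `N`) is in a forest state over `{1,…,k}`:
every vertex of `{1,…,k}` has degree `2m`, and each of the vertices `k+1,…,N` has degree
`m` with all of its neighbors in `{1,…,k}`. -/
def ForestState (m k N : ℕ) (g : SimpleGraph ℕ) : Prop :=
  (∀ v ∈ Finset.Icc 1 k, degIn g N v = 2*m) ∧
  (∀ v ∈ Finset.Icc (k+1) N, degIn g N v = m ∧ nbrsIn g N v ⊆ Finset.Icc 1 k)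

lemma icc_succ (k : ℕ) : Finset.Icc 1 (k+1) = insert (k+1) (Finset.Icc 1 k) := by
  ext x; simp [Finset.mem_Icc]; omega

lemma degIn_congr {g g' : SimpleGraph ℕ} {k v : ℕ}
    (h : ∀ u ∈ Finset.Icc 1 k, g.Adj v u ↔ g'.Adj v u) :
    degIn g k v = degIn g' k v := by
  unfold degIn
  congr 1
  exact Finset.filter_congr (fun u hu => by simp [h u hu])

/-- Facts from a single step. -/
lemma step_facts {m k : ℕ} {g g' : SimpleGraph ℕ} (h : IsUAStep m k g g') :
    (∀ v ∈ Finset.Icc 1 k,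
      degIn g' (k+1) v = degIn g k v + (if g'.Adj (k+1) v then 1 else 0)) ∧
    degIn g' (k+1) (k+1) = m ∧
    nbrsIn g' (k+1) (k+1) = (Finset.Icc 1 k).filter (fun u => g'.Adj (k+1) u) ∧
    ∑ v ∈ Finset.Icc 1 k, (if g'.Adj (k+1) v then 1 else 0) = m := by
  obtain ⟨h1, h2, h3, h4⟩ := h
  have hnb : nbrsIn g' (k+1) (k+1) = (Finset.Icc 1 k).filter (fun u => g'.Adj (k+1) u) := by
    unfold nbrsIn
    rw [icc_succ, Finset.filter_insert]
    rw [if_neg (g'.irrefl)]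
  have hsum : ∑ v ∈ Finset.Icc 1 k, (if g'.Adj (k+1) v then 1 else 0) = m := by
    rw [Finset.sum_boole]
    rw [hnb] at h3
    exact_mod_cast h3
  refine ⟨?_, ?_, hnb, hsum⟩
  · intro v hv
    unfold degIn
    rw [icc_succ, Finset.filter_insert]
    have hvk : v ≠ k+1 := by
      rcases Finset.mem_Icc.mp hv with ⟨_, h2⟩; omega
    have hcongr : (Finset.Icc 1 k).filter (fun u => g'.Adj v u)
        = (Finset.Icc 1 k).filter (fun u => g.Adj v u) := by
      apply Finset.filter_congr
      intro u hu
      have huk : u ≠ k+1 := by rcases Finset.mem_Icc.mp hu with ⟨_, h2⟩; omega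
      simp [h2 v u hvk huk]
    by_cases hadj : g'.Adj (k+1) v
    · rw [if_pos hadj.symm, Finset.card_insert_of_notMem (by simp [Finset.mem_Icc]),
        hcongr, if_pos hadj]
    · rw [if_neg (fun hc => hadj hc.symm), hcongr, if_neg hadj]
      omega
  · show (nbrsIn g' (k+1) (k+1)).card = m
    exact h3

/-- Invariant along the trajectory. -/
def TrajInv (m k : ℕ) (g : SimpleGraph ℕ) : Prop :=
  (∀ u v, g.Adj u v → u ∈ Finset.Icc 1 k ∧ v ∈ Finset.Icc 1 k) ∧
  (∀ v ∈ Finset.Icc 1 k, m ≤ degIn g k v ∧ degIn g k v ≤ 2*m) ∧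
  ∑ v ∈ Finset.Icc 1 k, (2*m - degIn g k v) = m*(m+1)

lemma inv_base (m : ℕ) : TrajInv m (m+1) (completeOn (m+1)) := by
  have hdeg : ∀ v ∈ Finset.Icc 1 (m+1), degIn (completeOn (m+1)) (m+1) v = m := by
    intro v hv
    unfold degIn
    have : (Finset.Icc 1 (m+1)).filter (fun u => (completeOn (m+1)).Adj v u)
        = (Finset.Icc 1 (m+1)).erase v := by
      ext u
      simp only [Finset.mem_filter, Finset.mem_erase, completeOn,
        SimpleGraph.fromRel_adj, ne_eq]
      constructor
      · rintro ⟨hu, hne, _⟩; exact ⟨fun h => hne h.symm, hu⟩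
      · rintro ⟨hne, hu⟩; exact ⟨hu, fun h => hne h.symm, Or.inl ⟨hv, hu⟩⟩
    rw [this, Finset.card_erase_of_mem hv, Nat.card_Icc]
    omega
  refine ⟨?_, ?_, ?_⟩
  · intro u v huv
    simp only [completeOn, SimpleGraph.fromRel_adj] at huv
    rcases huv with ⟨_, ⟨h1, h2⟩ | ⟨h1, h2⟩⟩ <;> exact ⟨by tauto, by tauto⟩
  · intro v hv; rw [hdeg v hv]; omega
  · rw [Finset.sum_congr rfl (fun v hv => by rw [hdeg v hv]),
      Finset.sum_const, Nat.card_Icc, smul_eq_mul]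
    have h1 : 2*m - m = m := by omega
    have h2 : m+1+1-1 = m+1 := by omega
    rw [h1, h2, Nat.mul_comm]

lemma inv_step {m k : ℕ} {g g' : SimpleGraph ℕ} (hinv : TrajInv m k g)
    (h : IsUAStep m k g g') : TrajInv m (k+1) g' := by
  obtain ⟨he, hd, hs⟩ := hinv
  obtain ⟨hdeg, hdegnew, hnb, hsum⟩ := step_facts h
  have hlt : ∀ v, g'.Adj (k+1) v → degIn g k v < 2*m := fun v hv => (h.2.2.2 v hv).2
  refine ⟨h.1, ?_, ?_⟩
  · intro v hv
    rw [icc_succ, Finset.mem_insert] at hv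
    rcases hv with rfl | hv
    · rw [hdegnew]; omega
    · rw [hdeg v hv]
      have h1 := (hd v hv).1
      have h2 := (hd v hv).2
      by_cases hadj : g'.Adj (k+1) v
      · have := hlt v hadj; rw [if_pos hadj]; omega
      · rw [if_neg hadj]; omega
  · rw [icc_succ, Finset.sum_insert (by simp [Finset.mem_Icc]), hdegnew]
    have key : ∀ v ∈ Finset.Icc 1 k,
        (2*m - degIn g' (k+1) v) + (if g'.Adj (k+1) v then 1 else 0)
          = 2*m - degIn g k v := by
      intro v hv
      rw [hdeg v hv]
      by_cases hadj : g'.Adj (k+1) v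
      · have := hlt v hadj; rw [if_pos hadj]; omega
      · rw [if_neg hadj]; omega
    have := Finset.sum_congr rfl key
    rw [Finset.sum_add_distrib, hsum, hs] at this
    set M := m*(m+1) with hM
    omega

lemma traj_inv {m N : ℕ} (T : UATrajUpTo m N) :
    ∀ k, m+1 ≤ k → k ≤ N → TrajInv m k (T.G k) := by
  intro k hk1 hk2
  obtain ⟨j, rfl⟩ : ∃ j, k = (m+1) + j := ⟨k - (m+1), by omega⟩
  clear hk1
  induction j with
  | zero => simpa [T.init] using inv_base m
  | succ j ih =>
    have h1 : m + 1 + j ≤ N := by omega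
    have h2 : m + 1 ≤ m + 1 + j := by omega
    have := inv_step (ih (by omega)) (T.step (m+1+j) h2 (by omega))
    simpa [Nat.add_assoc] using this

lemma build (m n : ℕ) (hm : 1 ≤ m) : ∀ s : ℕ, ∀ k : ℕ, n ≤ k → ∀ g : SimpleGraph ℕ,
    (∀ u v, g.Adj u v → u ∈ Finset.Icc 1 k ∧ v ∈ Finset.Icc 1 k) →
    (∀ v ∈ Finset.Icc 1 n, degIn g k v ≤ 2*m ∧ 2*m - degIn g k v ≤ s) →
    (∑ v ∈ Finset.Icc 1 n, (2*m - degIn g k v)) = m*s →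
    (∀ v ∈ Finset.Icc (n+1) k, degIn g k v = m ∧ nbrsIn g k v ⊆ Finset.Icc 1 n) →
    ∃ H : ℕ → SimpleGraph ℕ, H 0 = g ∧
      (∀ j < s, IsUAStep m (k+j) (H j) (H (j+1))) ∧
      (∀ v ∈ Finset.Icc 1 n, degIn (H s) (k+s) v = 2*m) ∧
      (∀ v ∈ Finset.Icc (n+1) (k+s), degIn (H s) (k+s) v = m ∧
        nbrsIn (H s) (k+s) v ⊆ Finset.Icc 1 n) := by
  intro s
  induction s with
  | zero =>
    intro k hk g h1 h2 h3 h5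
    refine ⟨fun _ => g, rfl, by omega, ?_, by simpa using h5⟩
    intro v hv
    have hz := Finset.sum_eq_zero_iff.mp (h3.trans (Nat.mul_zero m)) v hv
    have := (h2 v hv).1
    simp only [Nat.add_zero]
    omega
  | succ s ih =>
    intro k hk g h1 h2 h3 h5
    -- choose the set S
    set B := (Finset.Icc 1 n).filter (fun v => 2*m - degIn g k v = s+1) with hB
    set supp := (Finset.Icc 1 n).filter (fun v => degIn g k v < 2*m) with hsupp
    have hBsupp : B ⊆ supp := by
      intro v hv
      simp only [hB, hsupp, Finset.mem_filter] at hv ⊢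
      exact ⟨hv.1, by omega⟩
    have hBcard : B.card ≤ m := by
      have h1' : B.card * (s+1) = ∑ v ∈ B, (s+1) := by
        rw [Finset.sum_const, smul_eq_mul]
      have h2' : ∑ v ∈ B, (s+1) = ∑ v ∈ B, (2*m - degIn g k v) :=
        Finset.sum_congr rfl (fun v hv => by
          simp only [hB, Finset.mem_filter] at hv; omega)
      have h3' : ∑ v ∈ B, (2*m - degIn g k v) ≤ ∑ v ∈ Finset.Icc 1 n, (2*m - degIn g k v) :=
        Finset.sum_le_sum_of_subset (Finset.filter_subset _ _)
      rw [h3] at h3'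
      have : B.card * (s+1) ≤ m * (s+1) := by omega
      exact Nat.le_of_mul_le_mul_right this (by omega)
    have hsuppcard : m ≤ supp.card := by
      have h1' : ∑ v ∈ Finset.Icc 1 n, (2*m - degIn g k v)
          = ∑ v ∈ supp, (2*m - degIn g k v) := by
        symm
        apply Finset.sum_subset (Finset.filter_subset _ _)
        intro v hv hns
        have h2m : ¬ degIn g k v < 2*m := by
          intro hlt
          exact hns (by simp only [hsupp, Finset.mem_filter]; exact ⟨hv, hlt⟩)
        have := (h2 v hv).1
        omega
      have h2' : ∑ v ∈ supp, (2*m - degIn g k v) ≤ ∑ v ∈ supp, (s+1) :=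
        Finset.sum_le_sum (fun v hv => by
          have := (h2 v (Finset.mem_of_mem_filter v hv)).2; omega)
      rw [Finset.sum_const, smul_eq_mul] at h2'
      rw [h3] at h1'
      have : m * (s+1) ≤ supp.card * (s+1) := by omega
      exact Nat.le_of_mul_le_mul_right this (by omega)
    obtain ⟨S, hBS, hSsupp, hScard⟩ :=
      Finset.exists_subsuperset_card_eq hBsupp hBcard hsuppcard
    have hSn : S ⊆ Finset.Icc 1 n := hSsupp.trans (Finset.filter_subset _ _)
    have hSlt : ∀ v ∈ S, degIn g k v < 2*m := by
      intro v hv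
      have := hSsupp hv
      simp only [hsupp, Finset.mem_filter] at this
      exact this.2
    have hk1S : (k+1) ∉ S := fun hc => by
      have := Finset.mem_Icc.mp (hSn hc); omega
    have hgk1 : ∀ u, ¬ g.Adj (k+1) u := by
      intro u hc
      have := Finset.mem_Icc.mp (h1 _ _ hc).1; omega
    set g' : SimpleGraph ℕ := g ⊔ SimpleGraph.fromRel (fun u v => u = k+1 ∧ v ∈ S) with hg'
    have hadj : ∀ u v, g'.Adj u v ↔
        g.Adj u v ∨ (u = k+1 ∧ v ∈ S) ∨ (v = k+1 ∧ u ∈ S) := by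
      intro u v
      simp only [hg', SimpleGraph.sup_adj, SimpleGraph.fromRel_adj, ne_eq]
      constructor
      · rintro (h | ⟨hne, (⟨rfl, hv⟩ | ⟨rfl, hu⟩)⟩)
        · exact Or.inl h
        · exact Or.inr (Or.inl ⟨rfl, hv⟩)
        · exact Or.inr (Or.inr ⟨rfl, hu⟩)
      · rintro (h | ⟨rfl, hv⟩ | ⟨rfl, hu⟩)
        · exact Or.inl h
        · refine Or.inr ⟨?_, Or.inl ⟨rfl, hv⟩⟩
          intro hc; exact hk1S (hc ▸ hv)
        · refine Or.inr ⟨?_, Or.inr ⟨rfl, hu⟩⟩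
          intro hc; exact hk1S (hc ▸ hu)
    have hadjnew : ∀ u, g'.Adj (k+1) u ↔ u ∈ S := by
      intro u
      rw [hadj]
      constructor
      · rintro (h | ⟨_, hu⟩ | ⟨rfl, hS⟩)
        · exact absurd h (hgk1 u)
        · exact hu
        · exact absurd hS hk1S
      · intro h; exact Or.inr (Or.inl ⟨rfl, h⟩)
    have hic : ∀ u, u ∈ Finset.Icc 1 n → u ∈ Finset.Icc 1 k := by
      intro u hu
      have := Finset.mem_Icc.mp hu
      exact Finset.mem_Icc.mpr (by omega)
    have hstep : IsUAStep m k g g' := by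
      refine ⟨?_, ?_, ?_, ?_⟩
      · intro u v huv
        rw [hadj] at huv
        rcases huv with h | ⟨rfl, hv⟩ | ⟨rfl, hu⟩
        · obtain ⟨hu, hv⟩ := h1 u v h
          have hu' := Finset.mem_Icc.mp hu
          have hv' := Finset.mem_Icc.mp hv
          exact ⟨Finset.mem_Icc.mpr (by omega), Finset.mem_Icc.mpr (by omega)⟩
        · have hv' := Finset.mem_Icc.mp (hSn hv)
          exact ⟨Finset.mem_Icc.mpr (by omega), Finset.mem_Icc.mpr (by omega)⟩
        · have hu' := Finset.mem_Icc.mp (hSn hu)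
          exact ⟨Finset.mem_Icc.mpr (by omega), Finset.mem_Icc.mpr (by omega)⟩
      · intro u v hu hv
        rw [hadj]
        constructor
        · rintro (h | ⟨rfl, _⟩ | ⟨rfl, _⟩)
          · exact h
          · exact absurd rfl hu
          · exact absurd rfl hv
        · exact Or.inl
      · have : nbrsIn g' (k+1) (k+1) = S := by
          unfold nbrsIn
          ext u
          simp only [Finset.mem_filter, Finset.mem_Icc]
          rw [hadjnew]
          constructor
          · exact fun h => h.2
          · intro h
            have := Finset.mem_Icc.mp (hSn h)
            exact ⟨⟨by omega, by omega⟩, h⟩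
        rw [this, hScard]
      · intro u hu
        rw [hadjnew] at hu
        exact ⟨hic u (hSn hu), hSlt u hu⟩
    obtain ⟨hdeg0, hdegnew, hnb0, hsum0⟩ := step_facts hstep
    have hdeg : ∀ v ∈ Finset.Icc 1 k,
        degIn g' (k+1) v = degIn g k v + (if v ∈ S then 1 else 0) := by
      intro v hv
      rw [hdeg0 v hv]
      congr 1
      simp [hadjnew v]
    have hnbnew : nbrsIn g' (k+1) (k+1) = S := by
      rw [hnb0]
      ext u
      simp only [Finset.mem_filter]
      rw [hadjnew]
      constructor
      · exact fun h => h.2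
      · intro h; exact ⟨hic u (hSn h), h⟩
    -- verify IH hypotheses for g' at k+1
    have ih1 : ∀ u v, g'.Adj u v → u ∈ Finset.Icc 1 (k+1) ∧ v ∈ Finset.Icc 1 (k+1) :=
      hstep.1
    have ih2 : ∀ v ∈ Finset.Icc 1 n, degIn g' (k+1) v ≤ 2*m ∧ 2*m - degIn g' (k+1) v ≤ s := by
      intro v hv
      obtain ⟨ha, hb⟩ := h2 v hv
      rw [hdeg v (hic v hv)]
      by_cases hvS : v ∈ S
      · have := hSlt v hvS
        rw [if_pos hvS]
        constructor
        · omega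
        · by_cases hvB : v ∈ B
          · simp only [hB, Finset.mem_filter] at hvB; omega
          · have : ¬ (2*m - degIn g k v = s+1) := by
              intro hc
              exact hvB (by simp only [hB, Finset.mem_filter]; exact ⟨hv, hc⟩)
            omega
      · rw [if_neg hvS]
        constructor
        · omega
        · by_cases hvB : v ∈ B
          · exact absurd (hBS hvB) hvS
          · have : ¬ (2*m - degIn g k v = s+1) := by
              intro hc
              exact hvB (by simp only [hB, Finset.mem_filter]; exact ⟨hv, hc⟩)
            omega
    have ih3 : ∑ v ∈ Finset.Icc 1 n, (2*m - degIn g' (k+1) v) = m*s := by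
      have key : ∀ v ∈ Finset.Icc 1 n,
          (2*m - degIn g' (k+1) v) + (if v ∈ S then 1 else 0) = 2*m - degIn g k v := by
        intro v hv
        rw [hdeg v (hic v hv)]
        by_cases hvS : v ∈ S
        · have := hSlt v hvS; rw [if_pos hvS]; omega
        · rw [if_neg hvS]; omega
      have hsum2 : ∑ v ∈ Finset.Icc 1 n, (if v ∈ S then 1 else 0) = m := by
        rw [Finset.sum_boole]
        rw [Finset.filter_mem_eq_inter, Finset.inter_eq_right.mpr hSn]
        exact_mod_cast hScard
      have := Finset.sum_congr rfl key
      rw [Finset.sum_add_distrib, hsum2, h3, Nat.mul_succ] at this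
      set M := m*s
      omega
    have ih5 : ∀ v ∈ Finset.Icc (n+1) (k+1),
        degIn g' (k+1) v = m ∧ nbrsIn g' (k+1) v ⊆ Finset.Icc 1 n := by
      intro v hv
      rw [Finset.mem_Icc] at hv
      by_cases hvk : v = k+1
      · subst hvk
        exact ⟨hdegnew, by rw [hnbnew]; exact hSn⟩
      · have hvk' : v ∈ Finset.Icc 1 k := by rw [Finset.mem_Icc]; omega
        have hvS : v ∉ S := fun hc => by
          have := Finset.mem_Icc.mp (hSn hc); omega
        have hv5 := h5 v (by rw [Finset.mem_Icc]; omega)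
        constructor
        · rw [hdeg v hvk', if_neg hvS, hv5.1]
          omega
        · have : nbrsIn g' (k+1) v = nbrsIn g k v := by
            unfold nbrsIn
            rw [icc_succ, Finset.filter_insert]
            rw [if_neg (by
              intro hc
              rw [hadj] at hc
              rcases hc with h | ⟨hc, _⟩ | ⟨_, hc⟩
              · exact hgk1 v h.symm
              · omega
              · exact hvS hc)]
            ext u
            simp only [Finset.mem_filter]
            constructor
            · rintro ⟨hu, ha⟩
              exact ⟨hu, (hstep.2.1 v u hvk (by have := Finset.mem_Icc.mp hu; omega)).mp ha⟩
            · rintro ⟨hu, ha⟩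
              exact ⟨hu, (hstep.2.1 v u hvk (by have := Finset.mem_Icc.mp hu; omega)).mpr ha⟩
          rw [this]
          exact hv5.2
    obtain ⟨H', hH'0, hH'step, hH'deg, hH'new⟩ :=
      ih (k+1) (by omega) g' ih1 ih2 ih3 ih5
    refine ⟨fun j => match j with | 0 => g | (j+1) => H' j, rfl, ?_, ?_, ?_⟩
    · intro j hj
      match j with
      | 0 =>
        simpa [hH'0] using hstep
      | (j+1) =>
        have : k + (j+1) = (k+1) + j := by omega
        rw [this]
        exact hH'step j (by omega)
    · have : k + (s+1) = (k+1) + s := by omega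
      rw [this]
      exact hH'deg
    · have : k + (s+1) = (k+1) + s := by omega
      rw [this]
      exact hH'new

/-- For every integer `m > 1` and every uniform attachment trajectory defined
up to time `n ≥ m+1` with degree cap `d = 2m`, there is an admissible continuation by
`m+1` steps such that in `G (n+m+1)` every vertex of `{1,…,n}` has degree exactly `2m`,
and each of the `m+1` new vertices `n+1,…,n+m+1` has degree exactly `m` with all of its
neighbors lying in `{1,…,n}` (in particular, the open vertices of `G (n+m+1)` are exactly
`n+1,…,n+m+1`, and they are pairwise non-adjacent). -/
theorem uniform_attachment_forest_state_reachable (m : ℕ) (hm : 1 < m)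
    (n : ℕ) (hn : m + 1 ≤ n) (T : UATrajUpTo m n) :
    ∃ T' : UATrajUpTo m (n+m+1),
      (∀ k ≤ n, T'.G k = T.G k) ∧
      ForestState m n (n+m+1) (T'.G (n+m+1)) ∧
      (∀ v ∈ Finset.Icc 1 (n+m+1),
        degIn (T'.G (n+m+1)) (n+m+1) v < 2*m ↔ v ∈ Finset.Icc (n+1) (n+m+1)) ∧
      (∀ u ∈ Finset.Icc (n+1) (n+m+1), ∀ v ∈ Finset.Icc (n+1) (n+m+1),
        ¬ (T'.G (n+m+1)).Adj u v) := by
  obtain ⟨he, hd, hs⟩ := traj_inv T n hn le_rfl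
  have hm1 : 1 ≤ m := by omega
  obtain ⟨H, hH0, hHstep, hHdeg, hHnew⟩ :=
    build m n hm1 (m+1) n le_rfl (T.G n) he
      (fun v hv => ⟨(hd v hv).2, by have := (hd v hv).1; omega⟩) hs
      (fun v hv => absurd (Finset.mem_Icc.mp hv) (by omega))
  have harith : n + (m+1) = n+m+1 := by omega
  rw [harith] at hHdeg hHnew
  set Gfun : ℕ → SimpleGraph ℕ := fun j => if j ≤ n then T.G j else H (j - n) with hGfun
  have hGn : Gfun (n+m+1) = H (m+1) := by
    simp only [hGfun]
    rw [if_neg (by omega), show n+m+1-n = m+1 by omega]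
  refine ⟨⟨Gfun, ?_, ?_⟩, ?_, ?_, ?_, ?_⟩
  · simp only [hGfun]
    rw [if_pos hn]
    exact T.init
  · intro k hk1 hk2
    simp only [hGfun]
    by_cases hkn : k+1 ≤ n
    · rw [if_pos (by omega : k ≤ n), if_pos hkn]
      exact T.step k hk1 hkn
    · have hGk1 : (if k+1 ≤ n then T.G (k+1) else H (k+1-n)) = H ((k-n)+1) := by
        rw [if_neg hkn, show k+1-n = (k-n)+1 by omega]
      have hGk : (if k ≤ n then T.G k else H (k-n)) = H (k-n) := by
        by_cases h : k ≤ n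
        · have hkeq : k = n := by omega
          subst hkeq
          rw [if_pos le_rfl, Nat.sub_self, hH0]
        · rw [if_neg h]
      rw [hGk, hGk1]
      have := hHstep (k-n) (by omega)
      rwa [show n + (k-n) = k by omega] at this
  · intro k hk
    show (if k ≤ n then T.G k else H (k - n)) = T.G k
    rw [if_pos hk]
  · show ForestState m n (n+m+1) (Gfun (n+m+1))
    rw [hGn]
    exact ⟨hHdeg, hHnew⟩
  · show ∀ v ∈ Finset.Icc 1 (n+m+1),
      degIn (Gfun (n+m+1)) (n+m+1) v < 2*m ↔ v ∈ Finset.Icc (n+1) (n+m+1)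
    rw [hGn]
    intro v hv
    rw [Finset.mem_Icc] at hv
    by_cases hvn : v ≤ n
    · rw [hHdeg v (Finset.mem_Icc.mpr ⟨hv.1, hvn⟩), Finset.mem_Icc]
      omega
    · rw [(hHnew v (Finset.mem_Icc.mpr ⟨by omega, hv.2⟩)).1, Finset.mem_Icc]
      omega
  · show ∀ u ∈ Finset.Icc (n+1) (n+m+1), ∀ v ∈ Finset.Icc (n+1) (n+m+1),
      ¬ (Gfun (n+m+1)).Adj u v
    rw [hGn]
    intro u hu v hv hadj
    rw [Finset.mem_Icc] at hu hv
    have h := (hHnew u (Finset.mem_Icc.mpr hu)).2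
    have hvmem : v ∈ nbrsIn (H (m+1)) (n+m+1) u :=
      Finset.mem_filter.mpr ⟨Finset.mem_Icc.mpr ⟨by omega, hv.2⟩, hadj⟩
    have := Finset.mem_Icc.mp (h hvmem)
    omega
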